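/- Let G be a finite group, σ an automorphism of G, M a σ-invariant normal subgroup of G, ψ : G → H a group homomorphism with kernel M, and g, h ∈ G. If t solves h = ρ_{(g,1)^t}(1_G) in G, then t solves ψ(h) = ρ̄_{(ψ(g),1)^t}(1_H) in Im(ψ) with the induced automorphism σ̄; in particular, if the SDLP for ψ(g), ψ(h) in Im(ψ) has no solution, neither has the SDLP for g, h in G. -/
import Mathlib


/-- Multiplication in the semidirect product `G ⋊_σ ℕ`:
`(g,s)(g',s') = (g·σ^s(g'), s+s')`. -/
def sdMulA {G : Type*} [Group G] (σ : MulAut G) (x y : G × ℕ) : G × ℕ :=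
  (x.1 * (σ ^ x.2) y.1, x.2 + y.2)

/-- The `t`-th power in the semidirect product `G ⋊_σ ℕ`. -/
def sdPowA {G : Type*} [Group G] (σ : MulAut G) (x : G × ℕ) : ℕ → G × ℕ
  | 0 => (1, 0)
  | t + 1 => sdMulA σ x (sdPowA σ x t)

/-- The transformation `ρ_{(g,s)} : G → G`, `x ↦ g·σ^s(x)`. -/
def rhoA {G : Type*} [Group G] (σ : MulAut G) (x : G × ℕ) : G → G :=
  fun z => x.1 * (σ ^ x.2) z

/-- if `t` solves the SDLP for `g, h` in `G`, then `t` solves the SDLP for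
`ψ(g), ψ(h)` in `Im(ψ)` with the induced automorphism `σ̄`; in particular if the latter has
no solution, neither has the former. -/
theorem sdlp_pushforward {G H : Type*} [Group G] [Finite G] [Group H] [Finite H]
    (σ : MulAut G) (ψ : G →* H)
    (hM : Subgroup.map σ.toMonoidHom ψ.ker = ψ.ker)
    (σbar : MulAut ↥ψ.range)
    (hcompat : ∀ x : G,
      (σbar ⟨ψ x, MonoidHom.mem_range.mpr ⟨x, rfl⟩⟩ : H) = ψ (σ x))
    (g h : G) :
    (∀ t : ℕ, h = rhoA σ (sdPowA σ (g, 1) t) 1 →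
      (⟨ψ h, MonoidHom.mem_range.mpr ⟨h, rfl⟩⟩ : ψ.range)
        = rhoA σbar (sdPowA σbar (⟨ψ g, MonoidHom.mem_range.mpr ⟨g, rfl⟩⟩, 1) t) 1) ∧
    ((¬ ∃ t : ℕ, (⟨ψ h, MonoidHom.mem_range.mpr ⟨h, rfl⟩⟩ : ψ.range)
        = rhoA σbar (sdPowA σbar (⟨ψ g, MonoidHom.mem_range.mpr ⟨g, rfl⟩⟩, 1) t) 1) →
      ¬ ∃ t : ℕ, h = rhoA σ (sdPowA σ (g, 1) t) 1) := by
  -- compatibility for powers of σ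
  have hpow : ∀ (s : ℕ) (x : G),
      ((σbar ^ s) ⟨ψ x, MonoidHom.mem_range.mpr ⟨x, rfl⟩⟩ : H) = ψ ((σ ^ s) x) := by
    intro s
    induction s with
    | zero => intro x; simp
    | succ n ih =>
      intro x
      rw [pow_succ, pow_succ]
      simp only [MulAut.mul_apply]
      have h1 : (σbar ⟨ψ x, MonoidHom.mem_range.mpr ⟨x, rfl⟩⟩) =
          ⟨ψ (σ x), MonoidHom.mem_range.mpr ⟨σ x, rfl⟩⟩ := Subtype.ext (hcompat x)
      rw [h1, ih (σ x)]
  -- the key correspondence for sdPowA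
  have key : ∀ t : ℕ,
      ((sdPowA σbar (⟨ψ g, MonoidHom.mem_range.mpr ⟨g, rfl⟩⟩, 1) t).1 : H)
        = ψ ((sdPowA σ (g, 1) t).1) ∧
      (sdPowA σbar (⟨ψ g, MonoidHom.mem_range.mpr ⟨g, rfl⟩⟩, 1) t).2
        = (sdPowA σ (g, 1) t).2 := by
    intro t
    induction t with
    | zero => simp [sdPowA]
    | succ n ih =>
      obtain ⟨ih1, ih2⟩ := ih
      constructor
      · show ((⟨ψ g, _⟩ : ψ.range) * σbar ((sdPowA σbar _ n).1) : H) = ψ (g * σ ((sdPowA σ (g,1) n).1))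
        push_cast
        rw [map_mul]
        congr 1
        have : (sdPowA σbar (⟨ψ g, MonoidHom.mem_range.mpr ⟨g, rfl⟩⟩, 1) n).1 =
            ⟨ψ ((sdPowA σ (g,1) n).1), MonoidHom.mem_range.mpr ⟨_, rfl⟩⟩ := Subtype.ext ih1
        rw [this]
        have := hpow 1 ((sdPowA σ (g,1) n).1)
        simpa using this
      · show 1 + (sdPowA σbar _ n).2 = 1 + (sdPowA σ (g,1) n).2
        rw [ih2]
  constructor
  · intro t ht
    apply Subtype.ext
    show ψ h = _
    obtain ⟨k1, k2⟩ := key t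
    simp only [rhoA] at ht ⊢
    push_cast
    rw [k1]
    simp only [map_one, mul_one] at ht ⊢
    rw [ht]; simp
  · rintro hno ⟨t, ht⟩
    exact hno ⟨t, (by
      apply Subtype.ext
      show ψ h = _
      obtain ⟨k1, k2⟩ := key t
      simp only [rhoA] at ht ⊢
      push_cast
      rw [k1]
      simp only [map_one, mul_one] at ht ⊢
      rw [ht]; simp)⟩
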